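/- arXiv:1205.6350 — 6 statements merged into one kernel-verified Lean document; each statement's English description precedes it below -/
import Mathlib

section
/- The fields n₁ and n₂ form a pseudo-orthonormal normal frame of the meridian surface of parabolic type: for all (u,v) ∈ I × J one has ⟨n₁,n₁⟩ = 1, ⟨n₂,n₂⟩ = −1, ⟨n₁,n₂⟩ = 0, and ⟨n₁,z_u⟩ = ⟨n₁,z_v⟩ = ⟨n₂,z_u⟩ = ⟨n₂,z_v⟩ = 0. -/
namespace MeridianParabolic

noncomputable section

/-- The Minkowski inner product of signature (3,1) on `ℝ⁴`:
`⟨x,y⟩ = x₁y₁ + x₂y₂ + x₃y₃ − x₄y₄`. -/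
def mink (x y : Fin 4 → ℝ) : ℝ := x 0 * y 0 + x 1 * y 1 + x 2 * y 2 - x 3 * y 3

/-- The first standard basis vector `e₁`. -/
def e1 : Fin 4 → ℝ := ![1, 0, 0, 0]

/-- The second standard basis vector `e₂`. -/
def e2 : Fin 4 → ℝ := ![0, 1, 0, 0]

/-- The lightlike vector `ξ₁ = (e₃ + e₄)/√2`. -/
def xi1 : Fin 4 → ℝ := ![0, 0, 1 / Real.sqrt 2, 1 / Real.sqrt 2]

/-- The lightlike vector `ξ₂ = (−e₃ + e₄)/√2`. -/
def xi2 : Fin 4 → ℝ := ![0, 0, -(1 / Real.sqrt 2), 1 / Real.sqrt 2]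

/-- The meridian surface of parabolic type
`z(u,v) = fφ cos v · e₁ + fφ sin v · e₂ + (fφ²/2 + g) ξ₁ + f ξ₂`. -/
def z (f g φ : ℝ → ℝ) (u v : ℝ) : Fin 4 → ℝ :=
  (f u * φ v * Real.cos v) • e1 + (f u * φ v * Real.sin v) • e2 +
    (f u * (φ v) ^ 2 / 2 + g u) • xi1 + f u • xi2

/-- The partial derivative `z_u`. -/
def zu (f g φ : ℝ → ℝ) (u v : ℝ) : Fin 4 → ℝ := deriv (fun t => z f g φ t v) u

/-- The partial derivative `z_v`. -/
def zv (f g φ : ℝ → ℝ) (u v : ℝ) : Fin 4 → ℝ := deriv (fun t => z f g φ u t) v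

/-- The second partial derivative `z_uu`. -/
def zuu (f g φ : ℝ → ℝ) (u v : ℝ) : Fin 4 → ℝ := deriv (fun t => zu f g φ t v) u

/-- The second partial derivative `z_uv`. -/
def zuv (f g φ : ℝ → ℝ) (u v : ℝ) : Fin 4 → ℝ := deriv (fun t => zu f g φ u t) v

/-- The second partial derivative `z_vv`. -/
def zvv (f g φ : ℝ → ℝ) (u v : ℝ) : Fin 4 → ℝ := deriv (fun t => zv f g φ u t) v

/-- The normal field `n₁ = ((φ̇ sin v + φ cos v) e₁ + (−φ̇ cos v + φ sin v) e₂ + φ² ξ₁)/√(φ̇² + φ²)`. -/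
def n1 (φ : ℝ → ℝ) (v : ℝ) : Fin 4 → ℝ :=
  (Real.sqrt ((deriv φ v) ^ 2 + (φ v) ^ 2))⁻¹ •
    ((deriv φ v * Real.sin v + φ v * Real.cos v) • e1 +
      (-(deriv φ v) * Real.cos v + φ v * Real.sin v) • e2 + (φ v) ^ 2 • xi1)

/-- The normal field `n₂ = √(−f'/(2g')) (φ cos v e₁ + φ sin v e₂ + ((f'φ² − 2g')/(2f')) ξ₁ + ξ₂)`. -/
def n2 (f g φ : ℝ → ℝ) (u v : ℝ) : Fin 4 → ℝ :=
  Real.sqrt (-(deriv f u) / (2 * deriv g u)) •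
    ((φ v * Real.cos v) • e1 + (φ v * Real.sin v) • e2 +
      ((deriv f u * (φ v) ^ 2 - 2 * deriv g u) / (2 * deriv f u)) • xi1 + xi2)

def V (a b c d : ℝ) : Fin 4 → ℝ := a • e1 + b • e2 + c • xi1 + d • xi2

lemma mink_V (a b c d a' b' c' d' : ℝ) :
    mink (V a b c d) (V a' b' c' d') = a * a' + b * b' - (c * d' + d * c') := by
  have h2 : Real.sqrt 2 ^ 2 = 2 := Real.sq_sqrt (by norm_num)
  have h2' : Real.sqrt 2 ≠ 0 := by positivity
  simp [mink, V, e1, e2, xi1, xi2, Pi.add_apply, Pi.smul_apply, smul_eq_mul]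
  field_simp
  rw [h2]; ring

lemma n1_eq (φ : ℝ → ℝ) (v : ℝ) :
    n1 φ v = V ((Real.sqrt ((deriv φ v) ^ 2 + (φ v) ^ 2))⁻¹ * (deriv φ v * Real.sin v + φ v * Real.cos v))
      ((Real.sqrt ((deriv φ v) ^ 2 + (φ v) ^ 2))⁻¹ * (-(deriv φ v) * Real.cos v + φ v * Real.sin v))
      ((Real.sqrt ((deriv φ v) ^ 2 + (φ v) ^ 2))⁻¹ * (φ v) ^ 2) 0 := by
  funext i
  fin_cases i <;> simp [n1, V, e1, e2, xi1, xi2] <;> ring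

lemma n2_eq (f g φ : ℝ → ℝ) (u v : ℝ) :
    n2 f g φ u v = V (Real.sqrt (-(deriv f u) / (2 * deriv g u)) * (φ v * Real.cos v))
      (Real.sqrt (-(deriv f u) / (2 * deriv g u)) * (φ v * Real.sin v))
      (Real.sqrt (-(deriv f u) / (2 * deriv g u)) * ((deriv f u * (φ v) ^ 2 - 2 * deriv g u) / (2 * deriv f u)))
      (Real.sqrt (-(deriv f u) / (2 * deriv g u))) := by
  funext i
  fin_cases i <;> simp [n2, V, e1, e2, xi1, xi2] <;> ring

lemma zu_eq (f g φ : ℝ → ℝ) (u v : ℝ) (hfd : HasDerivAt f (deriv f u) u)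
    (hgd : HasDerivAt g (deriv g u) u) :
    zu f g φ u v = V (deriv f u * φ v * Real.cos v) (deriv f u * φ v * Real.sin v)
      (deriv f u * (φ v) ^ 2 / 2 + deriv g u) (deriv f u) := by
  have h1 := ((hfd.mul_const (φ v)).mul_const (Real.cos v)).smul_const e1
  have h2 := ((hfd.mul_const (φ v)).mul_const (Real.sin v)).smul_const e2
  have h3 := (((hfd.mul_const ((φ v) ^ 2)).div_const 2).add hgd).smul_const xi1
  have h4 := hfd.smul_const xi2
  exact ((((h1.add h2).add h3).add h4).deriv)

lemma zv_eq (f g φ : ℝ → ℝ) (u v : ℝ) (hφd : HasDerivAt φ (deriv φ v) v) :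
    zv f g φ u v = V (f u * (deriv φ v * Real.cos v - φ v * Real.sin v))
      (f u * (deriv φ v * Real.sin v + φ v * Real.cos v))
      (f u * φ v * deriv φ v) 0 := by
  have hc : HasDerivAt Real.cos (-Real.sin v) v := Real.hasDerivAt_cos v
  have hs : HasDerivAt Real.sin (Real.cos v) v := Real.hasDerivAt_sin v
  have h1 := ((hφd.const_mul (f u)).mul hc).smul_const e1
  have h2 := ((hφd.const_mul (f u)).mul hs).smul_const e2
  have h3 := ((((hφd.pow 2).const_mul (f u)).div_const 2).add_const (g u)).smul_const xi1
  have h4 : HasDerivAt (fun _ : ℝ => f u • xi2) 0 v := hasDerivAt_const v _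
  have H := (((h1.add h2).add h3).add h4).deriv
  rw [zv, show (fun t => z f g φ u t) = (fun t =>
      ((f u * φ t) * Real.cos t) • e1 + ((f u * φ t) * Real.sin t) • e2 +
      (f u * φ t ^ 2 / 2 + g u) • xi1 + f u • xi2) from rfl]
  erw [H]
  funext i
  fin_cases i <;> simp [V, e1, e2, xi1, xi2] <;> ring


/-- `n₁, n₂` form a pseudo-orthonormal normal frame of the meridian surface
of parabolic type: `⟨n₁,n₁⟩ = 1`, `⟨n₂,n₂⟩ = −1`, `⟨n₁,n₂⟩ = 0`, and both are
orthogonal to `z_u` and `z_v`. -/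
theorem statement3
    (I J : Set ℝ) (hIopen : IsOpen I) (hIconn : IsPreconnected I)
    (hJopen : IsOpen J) (hJconn : IsPreconnected J)
    (f g φ : ℝ → ℝ)
    (hf : ContDiffOn ℝ (⊤ : ℕ∞) f I) (hg : ContDiffOn ℝ (⊤ : ℕ∞) g I)
    (hφ : ContDiffOn ℝ (⊤ : ℕ∞) φ J)
    (hfpos : ∀ u ∈ I, 0 < f u)
    (hfg : ∀ u ∈ I, 0 < -(deriv f u * deriv g u))
    (hφpos : ∀ v ∈ J, 0 < (deriv φ v) ^ 2 + (φ v) ^ 2) :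
    ∀ u ∈ I, ∀ v ∈ J,
      mink (n1 φ v) (n1 φ v) = 1 ∧
      mink (n2 f g φ u v) (n2 f g φ u v) = -1 ∧
      mink (n1 φ v) (n2 f g φ u v) = 0 ∧
      mink (n1 φ v) (zu f g φ u v) = 0 ∧
      mink (n1 φ v) (zv f g φ u v) = 0 ∧
      mink (n2 f g φ u v) (zu f g φ u v) = 0 ∧
      mink (n2 f g φ u v) (zv f g φ u v) = 0 := by
  intro u hu v hv
  have hfd : HasDerivAt f (deriv f u) u :=
    (((hf.contDiffAt (hIopen.mem_nhds hu)).differentiableAt (by simp)).hasDerivAt)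
  have hgd : HasDerivAt g (deriv g u) u :=
    (((hg.contDiffAt (hIopen.mem_nhds hu)).differentiableAt (by simp)).hasDerivAt)
  have hφd : HasDerivAt φ (deriv φ v) v :=
    (((hφ.contDiffAt (hJopen.mem_nhds hv)).differentiableAt (by simp)).hasDerivAt)
  have hS : 0 < (deriv φ v) ^ 2 + (φ v) ^ 2 := hφpos v hv
  have hs2 : Real.sqrt ((deriv φ v) ^ 2 + (φ v) ^ 2) ^ 2 = (deriv φ v) ^ 2 + (φ v) ^ 2 :=
    Real.sq_sqrt hS.le
  have hsne : Real.sqrt ((deriv φ v) ^ 2 + (φ v) ^ 2) ≠ 0 :=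
    (Real.sqrt_pos.mpr hS).ne'
  have hFG : 0 < -(deriv f u * deriv g u) := hfg u hu
  have hfne : deriv f u ≠ 0 := by intro h; rw [h] at hFG; simp at hFG
  have hgne : deriv g u ≠ 0 := by intro h; rw [h] at hFG; simp at hFG
  have hRpos : 0 < -(deriv f u) / (2 * deriv g u) := by
    have : -(deriv f u) / (2 * deriv g u) = -(deriv f u * deriv g u) / (2 * (deriv g u) ^ 2) := by
      field_simp
    rw [this]; positivity
  have hr2 : Real.sqrt (-(deriv f u) / (2 * deriv g u)) ^ 2 = -(deriv f u) / (2 * deriv g u) :=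
    Real.sq_sqrt hRpos.le
  have hrne : Real.sqrt (-(deriv f u) / (2 * deriv g u)) ≠ 0 := (Real.sqrt_pos.mpr hRpos).ne'
  have pyth := Real.sin_sq_add_cos_sq v
  rw [n1_eq, n2_eq, zu_eq f g φ u v hfd hgd, zv_eq f g φ u v hφd]
  set s := Real.sqrt ((deriv φ v) ^ 2 + (φ v) ^ 2)
  set r := Real.sqrt (-(deriv f u) / (2 * deriv g u))
  refine ⟨?_, ?_, ?_, ?_, ?_, ?_, ?_⟩ <;> rw [mink_V]
  · field_simp
    nlinarith [pyth, hs2, sq_nonneg (φ v), sq_nonneg (deriv φ v)]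
  · field_simp
    have hr2' : 2 * deriv g u * r ^ 2 = -deriv f u := by rw [hr2]; field_simp
    linear_combination (2 * deriv f u * r ^ 2 * (φ v) ^ 2) * pyth + 2 * hr2'
  · field_simp
    linear_combination (2 * r * deriv f u * (φ v) ^ 2) * pyth
  · field_simp
    linear_combination (2 * deriv f u * (φ v) ^ 2) * pyth
  · ring
  · field_simp
    linear_combination (2 * deriv f u * r * (φ v) ^ 2) * pyth
  · field_simp
    linear_combination (2 * r * f u * φ v * deriv φ v * deriv f u) * pyth

end
end MeridianParabolic
end

section
/- Assume moreover f' > 0 (hence g' < 0) on I. Then the mean curvature vector of the meridian surface of parabolic type satisfies, at every (u,v) ∈ I × J, H(u,v) = (κ̄(v)/(2f(u))) n₁(v) + (1/2)(κ_m(u) + f'(u)/(f(u)√(−2f'(u)g'(u)))) n₂(u,v), where κ_m(u) = (f'g'' − g'f'')/(−2f'g')^{3/2} and κ̄(v) = (φφ̈ − 2φ̇² − φ²)/(φ̇² + φ²)^{3/2}. -/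
namespace MeridianParabolic

noncomputable section

/-- The curvature `κ_m(u) = (f'g'' − g'f'')/(−2f'g')^{3/2}` of the meridians. -/
def kappam (f g : ℝ → ℝ) (u : ℝ) : ℝ :=
  (deriv f u * deriv (deriv g) u - deriv g u * deriv (deriv f) u) /
    (-2 * deriv f u * deriv g u) ^ ((3 : ℝ) / 2)

/-- The curvature `κ̄(v) = (φφ̈ − 2φ̇² − φ²)/(φ̇² + φ²)^{3/2}`. -/
def kappabar (φ : ℝ → ℝ) (v : ℝ) : ℝ :=
  (φ v * deriv (deriv φ) v - 2 * (deriv φ v) ^ 2 - (φ v) ^ 2) /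
    ((deriv φ v) ^ 2 + (φ v) ^ 2) ^ ((3 : ℝ) / 2)

/-- The mean curvature vector
`H = (1/2)(⟨z_uu,n₁⟩/E + ⟨z_vv,n₁⟩/G) n₁ − (1/2)(⟨z_uu,n₂⟩/E + ⟨z_vv,n₂⟩/G) n₂`,
where `E = ⟨z_u,z_u⟩` and `G = ⟨z_v,z_v⟩`. -/
def Hvec (f g φ : ℝ → ℝ) (u v : ℝ) : Fin 4 → ℝ :=
  (1 / 2 * (mink (zuu f g φ u v) (n1 φ v) / mink (zu f g φ u v) (zu f g φ u v) +
      mink (zvv f g φ u v) (n1 φ v) / mink (zv f g φ u v) (zv f g φ u v))) • n1 φ v -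
  (1 / 2 * (mink (zuu f g φ u v) (n2 f g φ u v) / mink (zu f g φ u v) (zu f g φ u v) +
      mink (zvv f g φ u v) (n2 f g φ u v) / mink (zv f g φ u v) (zv f g φ u v))) • n2 f g φ u v

/-- Auxiliary combination of the frame vectors. -/
def W (a b c d : ℝ) : Fin 4 → ℝ := a • e1 + b • e2 + c • xi1 + d • xi2

theorem mink_W (a b c d a' b' c' d' : ℝ) :
    mink (W a b c d) (W a' b' c' d') = a * a' + b * b' - c * d' - d * c' := by
  have h0 : Real.sqrt 2 ≠ 0 := by positivity
  simp [mink, W, e1, e2, xi1, xi2]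
  field_simp
  ring_nf
  rw [Real.sq_sqrt (by norm_num)]
  ring

theorem scalar2 (C F1 G1 F2 G2 f X P : ℝ) (hC : C ≠ 0) (hF : f ≠ 0)
    (hF1 : F1 ≠ 0) (hG1 : G1 ≠ 0) (hX : X ≠ 0) :
    -(1 / 2 * (F1 / C * (F2 * P ^ 2 / 2 - G2 - F2 * ((F1 * P ^ 2 - 2 * G1) / (2 * F1))) /
        (-2 * F1 * G1) + -(F1 / C * f * X) / (f ^ 2 * X))) =
      1 / 2 * ((F1 * G2 - G1 * F2) / (-2 * F1 * G1 * C) + F1 / (f * C)) := by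
  field_simp
  ring

theorem hasDerivAt_W {a b c d : ℝ → ℝ} {a' b' c' d' x : ℝ}
    (ha : HasDerivAt a a' x) (hb : HasDerivAt b b' x)
    (hc : HasDerivAt c c' x) (hd : HasDerivAt d d' x) :
    HasDerivAt (fun t => W (a t) (b t) (c t) (d t)) (W a' b' c' d') x :=
  (((ha.smul_const e1).add (hb.smul_const e2)).add (hc.smul_const xi1)).add (hd.smul_const xi2)

set_option maxHeartbeats 1000000 in
/-- assuming `f' > 0` (hence `g' < 0`), the mean curvature vector of the
meridian surface of parabolic type satisfies
`H = (κ̄/(2f)) n₁ + (1/2)(κ_m + f'/(f√(−2f'g'))) n₂`. -/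
theorem statement6
    (I J : Set ℝ) (hIopen : IsOpen I) (hIconn : IsPreconnected I)
    (hJopen : IsOpen J) (hJconn : IsPreconnected J)
    (f g φ : ℝ → ℝ)
    (hf : ContDiffOn ℝ (⊤ : ℕ∞) f I) (hg : ContDiffOn ℝ (⊤ : ℕ∞) g I)
    (hφ : ContDiffOn ℝ (⊤ : ℕ∞) φ J)
    (hfpos : ∀ u ∈ I, 0 < f u)
    (hfg : ∀ u ∈ I, 0 < -(deriv f u * deriv g u))
    (hφpos : ∀ v ∈ J, 0 < (deriv φ v) ^ 2 + (φ v) ^ 2)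
    (hfd : ∀ u ∈ I, 0 < deriv f u) (hgd : ∀ u ∈ I, deriv g u < 0) :
    ∀ u ∈ I, ∀ v ∈ J,
      Hvec f g φ u v =
        (kappabar φ v / (2 * f u)) • n1 φ v +
          (1 / 2 * (kappam f g u +
              deriv f u / (f u * Real.sqrt (-2 * deriv f u * deriv g u)))) •
            n2 f g φ u v := by
  intro u hu v hv
  have hIu : I ∈ nhds u := hIopen.mem_nhds hu
  have hJv : J ∈ nhds v := hJopen.mem_nhds hv
  have hdf : ∀ t ∈ I, HasDerivAt f (deriv f t) t := fun t ht =>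
    ((hf.differentiableOn (by simp)).differentiableAt (hIopen.mem_nhds ht)).hasDerivAt
  have hdg : ∀ t ∈ I, HasDerivAt g (deriv g t) t := fun t ht =>
    ((hg.differentiableOn (by simp)).differentiableAt (hIopen.mem_nhds ht)).hasDerivAt
  have hdphi : ∀ t ∈ J, HasDerivAt φ (deriv φ t) t := fun t ht =>
    ((hφ.differentiableOn (by simp)).differentiableAt (hJopen.mem_nhds ht)).hasDerivAt
  have hf1 : ContDiffOn ℝ (⊤ : ℕ∞) (deriv f) I := hf.deriv_of_isOpen hIopen (by simp)
  have hg1 : ContDiffOn ℝ (⊤ : ℕ∞) (deriv g) I := hg.deriv_of_isOpen hIopen (by simp)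
  have hφ1 : ContDiffOn ℝ (⊤ : ℕ∞) (deriv φ) J := hφ.deriv_of_isOpen hJopen (by simp)
  have hdf' : HasDerivAt (deriv f) (deriv (deriv f) u) u :=
    ((hf1.differentiableOn (by simp)).differentiableAt hIu).hasDerivAt
  have hdg' : HasDerivAt (deriv g) (deriv (deriv g) u) u :=
    ((hg1.differentiableOn (by simp)).differentiableAt hIu).hasDerivAt
  have hdphi' : HasDerivAt (deriv φ) (deriv (deriv φ) v) v :=
    ((hφ1.differentiableOn (by simp)).differentiableAt hJv).hasDerivAt
  -- first derivatives
  have hzu : ∀ t ∈ I, zu f g φ t v =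
      W (deriv f t * φ v * Real.cos v) (deriv f t * φ v * Real.sin v)
        (deriv f t * φ v ^ 2 / 2 + deriv g t) (deriv f t) := by
    intro t ht
    have h : HasDerivAt (fun s => z f g φ s v)
        (W (deriv f t * φ v * Real.cos v) (deriv f t * φ v * Real.sin v)
          (deriv f t * φ v ^ 2 / 2 + deriv g t) (deriv f t)) t :=
      hasDerivAt_W (((hdf t ht).mul_const _).mul_const _)
        (((hdf t ht).mul_const _).mul_const _)
        ((((hdf t ht).mul_const _).div_const 2).add (hdg t ht)) (hdf t ht)
    exact h.deriv
  have hzv : ∀ t ∈ J, zv f g φ u t =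
      W (f u * (deriv φ t * Real.cos t - φ t * Real.sin t))
        (f u * (deriv φ t * Real.sin t + φ t * Real.cos t))
        (f u * (φ t * deriv φ t)) 0 := by
    intro t ht
    have h1 : HasDerivAt (fun s => f u * φ s * Real.cos s)
        (f u * (deriv φ t * Real.cos t - φ t * Real.sin t)) t := by
      have h := ((hdphi t ht).const_mul (f u)).mul (Real.hasDerivAt_cos t)
      convert h using 1 <;> first | rfl | skip
      ring
    have h2 : HasDerivAt (fun s => f u * φ s * Real.sin s)
        (f u * (deriv φ t * Real.sin t + φ t * Real.cos t)) t := by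
      have h := ((hdphi t ht).const_mul (f u)).mul (Real.hasDerivAt_sin t)
      convert h using 1 <;> first | rfl | skip
      ring
    have h3 : HasDerivAt (fun s => f u * φ s ^ 2 / 2 + g u)
        (f u * (φ t * deriv φ t)) t := by
      have h := ((((hdphi t ht).pow 2).const_mul (f u)).div_const 2).add_const (g u)
      convert h using 1 <;> first | rfl | skip
      norm_num
      ring
    have h : HasDerivAt (fun s => z f g φ u s)
        (W (f u * (deriv φ t * Real.cos t - φ t * Real.sin t))
          (f u * (deriv φ t * Real.sin t + φ t * Real.cos t))
          (f u * (φ t * deriv φ t)) 0) t :=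
      hasDerivAt_W h1 h2 h3 (hasDerivAt_const t (f u))
    exact h.deriv
  -- second derivatives
  have hzuu : zuu f g φ u v =
      W (deriv (deriv f) u * φ v * Real.cos v) (deriv (deriv f) u * φ v * Real.sin v)
        (deriv (deriv f) u * φ v ^ 2 / 2 + deriv (deriv g) u) (deriv (deriv f) u) := by
    have hev : (fun t => zu f g φ t v) =ᶠ[nhds u]
        (fun t => W (deriv f t * φ v * Real.cos v) (deriv f t * φ v * Real.sin v)
          (deriv f t * φ v ^ 2 / 2 + deriv g t) (deriv f t)) := by
      filter_upwards [hIu] with t ht using hzu t ht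
    have h : HasDerivAt (fun t => W (deriv f t * φ v * Real.cos v)
        (deriv f t * φ v * Real.sin v) (deriv f t * φ v ^ 2 / 2 + deriv g t) (deriv f t))
        (W (deriv (deriv f) u * φ v * Real.cos v) (deriv (deriv f) u * φ v * Real.sin v)
          (deriv (deriv f) u * φ v ^ 2 / 2 + deriv (deriv g) u) (deriv (deriv f) u)) u :=
      hasDerivAt_W ((hdf'.mul_const _).mul_const _) ((hdf'.mul_const _).mul_const _)
        (((hdf'.mul_const _).div_const 2).add hdg') hdf'
    unfold zuu
    rw [hev.deriv_eq]
    exact h.deriv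
  have hzvv : zvv f g φ u v =
      W (f u * (deriv (deriv φ) v * Real.cos v - 2 * deriv φ v * Real.sin v - φ v * Real.cos v))
        (f u * (deriv (deriv φ) v * Real.sin v + 2 * deriv φ v * Real.cos v - φ v * Real.sin v))
        (f u * (deriv φ v ^ 2 + φ v * deriv (deriv φ) v)) 0 := by
    have hev : (fun t => zv f g φ u t) =ᶠ[nhds v]
        (fun t => W (f u * (deriv φ t * Real.cos t - φ t * Real.sin t))
          (f u * (deriv φ t * Real.sin t + φ t * Real.cos t))
          (f u * (φ t * deriv φ t)) 0) := by
      filter_upwards [hJv] with t ht using hzv t ht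
    have h1 : HasDerivAt (fun t => f u * (deriv φ t * Real.cos t - φ t * Real.sin t))
        (f u * (deriv (deriv φ) v * Real.cos v - 2 * deriv φ v * Real.sin v -
          φ v * Real.cos v)) v := by
      have h := ((hdphi'.mul (Real.hasDerivAt_cos v)).sub
        ((hdphi v hv).mul (Real.hasDerivAt_sin v))).const_mul (f u)
      convert h using 1 <;> first | rfl | skip
      ring
    have h2 : HasDerivAt (fun t => f u * (deriv φ t * Real.sin t + φ t * Real.cos t))
        (f u * (deriv (deriv φ) v * Real.sin v + 2 * deriv φ v * Real.cos v -
          φ v * Real.sin v)) v := by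
      have h := ((hdphi'.mul (Real.hasDerivAt_sin v)).add
        ((hdphi v hv).mul (Real.hasDerivAt_cos v))).const_mul (f u)
      convert h using 1 <;> first | rfl | skip
      ring
    have h3 : HasDerivAt (fun t => f u * (φ t * deriv φ t))
        (f u * (deriv φ v ^ 2 + φ v * deriv (deriv φ) v)) v := by
      have h := ((hdphi v hv).mul hdphi').const_mul (f u)
      convert h using 1 <;> first | rfl | skip
      ring
    have h : HasDerivAt (fun t => W (f u * (deriv φ t * Real.cos t - φ t * Real.sin t))
        (f u * (deriv φ t * Real.sin t + φ t * Real.cos t)) (f u * (φ t * deriv φ t)) 0)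
        (W (f u * (deriv (deriv φ) v * Real.cos v - 2 * deriv φ v * Real.sin v -
            φ v * Real.cos v))
          (f u * (deriv (deriv φ) v * Real.sin v + 2 * deriv φ v * Real.cos v -
            φ v * Real.sin v))
          (f u * (deriv φ v ^ 2 + φ v * deriv (deriv φ) v)) 0) v :=
      hasDerivAt_W h1 h2 h3 (hasDerivAt_const v 0)
    unfold zvv
    rw [hev.deriv_eq]
    exact h.deriv
  -- frame vectors in W form
  have hn1 : n1 φ v =
      W ((Real.sqrt (deriv φ v ^ 2 + φ v ^ 2))⁻¹ * (deriv φ v * Real.sin v + φ v * Real.cos v))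
        ((Real.sqrt (deriv φ v ^ 2 + φ v ^ 2))⁻¹ * (-(deriv φ v) * Real.cos v + φ v * Real.sin v))
        ((Real.sqrt (deriv φ v ^ 2 + φ v ^ 2))⁻¹ * φ v ^ 2) 0 := by
    unfold n1 W
    module
  have hn2 : n2 f g φ u v =
      W (Real.sqrt (-(deriv f u) / (2 * deriv g u)) * (φ v * Real.cos v))
        (Real.sqrt (-(deriv f u) / (2 * deriv g u)) * (φ v * Real.sin v))
        (Real.sqrt (-(deriv f u) / (2 * deriv g u)) *
          ((deriv f u * φ v ^ 2 - 2 * deriv g u) / (2 * deriv f u)))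
        (Real.sqrt (-(deriv f u) / (2 * deriv g u))) := by
    unfold n2 W
    module
  -- basic positivity facts
  have hF := hfpos u hu
  have hF1 := hfd u hu
  have hG1 := hgd u hu
  have hX := hφpos v hv
  have hs : Real.sin v ^ 2 + Real.cos v ^ 2 = 1 := Real.sin_sq_add_cos_sq v
  have hApos : 0 < Real.sqrt (deriv φ v ^ 2 + φ v ^ 2) := Real.sqrt_pos.mpr hX
  have hEpos : (0:ℝ) < -2 * deriv f u * deriv g u := by nlinarith
  have hCpos : 0 < Real.sqrt (-2 * deriv f u * deriv g u) := Real.sqrt_pos.mpr hEpos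
  have hBC : Real.sqrt (-(deriv f u) / (2 * deriv g u)) *
      Real.sqrt (-2 * deriv f u * deriv g u) = deriv f u := by
    have hq : 0 < -(deriv f u) / (2 * deriv g u) :=
      div_pos_of_neg_of_neg (by linarith) (by linarith)
    rw [← Real.sqrt_mul hq.le,
      show (-(deriv f u) / (2 * deriv g u)) * (-2 * deriv f u * deriv g u) = deriv f u ^ 2 by
        field_simp [hG1.ne]]
    exact Real.sqrt_sq hF1.le
  have hBeq : Real.sqrt (-(deriv f u) / (2 * deriv g u)) =
      deriv f u / Real.sqrt (-2 * deriv f u * deriv g u) :=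
    (eq_div_iff hCpos.ne').mpr hBC
  -- the mink identities
  have hMuu1 : mink (zuu f g φ u v) (n1 φ v) = 0 := by
    rw [hzuu, hn1, mink_W]
    linear_combination ((Real.sqrt (deriv φ v ^ 2 + φ v ^ 2))⁻¹ *
      deriv (deriv f) u * φ v ^ 2) * hs
  have hMvv1 : mink (zvv f g φ u v) (n1 φ v) =
      f u * (φ v * deriv (deriv φ) v - 2 * deriv φ v ^ 2 - φ v ^ 2) /
        Real.sqrt (deriv φ v ^ 2 + φ v ^ 2) := by
    rw [hzvv, hn1, mink_W, div_eq_mul_inv]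
    linear_combination ((Real.sqrt (deriv φ v ^ 2 + φ v ^ 2))⁻¹ * f u *
      (φ v * deriv (deriv φ) v - 2 * deriv φ v ^ 2 - φ v ^ 2)) * hs
  have hMuu2 : mink (zuu f g φ u v) (n2 f g φ u v) =
      Real.sqrt (-(deriv f u) / (2 * deriv g u)) *
        (deriv (deriv f) u * φ v ^ 2 / 2 - deriv (deriv g) u -
          deriv (deriv f) u * ((deriv f u * φ v ^ 2 - 2 * deriv g u) / (2 * deriv f u))) := by
    rw [hzuu, hn2, mink_W]
    linear_combination (Real.sqrt (-(deriv f u) / (2 * deriv g u)) *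
      deriv (deriv f) u * φ v ^ 2) * hs
  have hMvv2 : mink (zvv f g φ u v) (n2 f g φ u v) =
      -(Real.sqrt (-(deriv f u) / (2 * deriv g u)) * f u *
        (deriv φ v ^ 2 + φ v ^ 2)) := by
    rw [hzvv, hn2, mink_W]
    linear_combination (Real.sqrt (-(deriv f u) / (2 * deriv g u)) * f u * φ v *
      (deriv (deriv φ) v - φ v)) * hs
  have hE : mink (zu f g φ u v) (zu f g φ u v) = -2 * deriv f u * deriv g u := by
    rw [hzu u hu, mink_W]
    linear_combination (deriv f u ^ 2 * φ v ^ 2) * hs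
  have hG : mink (zv f g φ u v) (zv f g φ u v) = f u ^ 2 * (deriv φ v ^ 2 + φ v ^ 2) := by
    rw [hzv v hv, mink_W]
    linear_combination (f u ^ 2 * (deriv φ v ^ 2 + φ v ^ 2)) * hs
  have hCne2 : Real.sqrt (-(2 * deriv f u * deriv g u)) ≠ 0 := by
    rw [show -(2 * deriv f u * deriv g u) = -2 * deriv f u * deriv g u by ring]
    exact hCpos.ne'
  have hCne3 : Real.sqrt (-(deriv f u * deriv g u * 2)) ≠ 0 := by
    rw [show -(deriv f u * deriv g u * 2) = -2 * deriv f u * deriv g u by ring]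
    exact hCpos.ne'
  -- rpow facts
  have hA32 : (deriv φ v ^ 2 + φ v ^ 2) ^ ((3 : ℝ) / 2) =
      (deriv φ v ^ 2 + φ v ^ 2) * Real.sqrt (deriv φ v ^ 2 + φ v ^ 2) := by
    rw [show ((3 : ℝ) / 2) = 1 + 1 / 2 by norm_num, Real.rpow_add hX, Real.rpow_one,
      ← Real.sqrt_eq_rpow]
  have hC32 : (-2 * deriv f u * deriv g u) ^ ((3 : ℝ) / 2) =
      (-2 * deriv f u * deriv g u) * Real.sqrt (-2 * deriv f u * deriv g u) := by
    rw [show ((3 : ℝ) / 2) = 1 + 1 / 2 by norm_num, Real.rpow_add hEpos, Real.rpow_one,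
      ← Real.sqrt_eq_rpow]
  -- final computation
  unfold Hvec
  rw [hMuu1, hMvv1, hMuu2, hMvv2, hE, hG, sub_eq_add_neg, ← neg_smul]
  congr 1
  · congr 1
    unfold kappabar
    rw [hA32]
    field_simp [hApos.ne', hF.ne', hX.ne']
    ring
  · congr 1
    unfold kappam
    rw [hC32, hBeq]
    exact scalar2 _ _ _ _ _ _ _ _ hCpos.ne' hF.ne' hF1.ne' hG1.ne hX.ne'

end
end MeridianParabolic
end

section
/- Assume moreover f' > 0 (hence g' < 0) on I. Fix (u,v) ∈ I × J. Then the mean curvature vector of the meridian surface of parabolic type is lightlike at (u,v), i.e. ⟨H(u,v),H(u,v)⟩ = 0, if and only if κ̄(v)² = (f(u)(f''(u)g'(u) − f'(u)g''(u)) + 2f'(u)g'(u)f'(u))² / (−2f'(u)g'(u))³, where κ̄(v) = (φφ̈ − 2φ̇² − φ²)/(φ̇² + φ²)^{3/2}. -/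
namespace MeridianParabolic

noncomputable section

set_option maxHeartbeats 2000000

-- auxiliary
def vec (a b c d : ℝ) : Fin 4 → ℝ := a • e1 + b • e2 + c • xi1 + d • xi2

lemma mink_vec (a b c d a' b' c' d' : ℝ) :
    mink (vec a b c d) (vec a' b' c' d') = a*a' + b*b' - (c*d' + d*c') := by
  have h2 : Real.sqrt 2 * Real.sqrt 2 = 2 := Real.mul_self_sqrt (by norm_num)
  have h0 : Real.sqrt 2 ≠ 0 := by positivity
  simp only [vec, mink, e1, e2, xi1, xi2, Pi.add_apply, Pi.smul_apply, smul_eq_mul,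
    Matrix.cons_val_zero, Matrix.cons_val_one, Matrix.head_cons, Matrix.cons_val_two,
    Matrix.tail_cons, Matrix.cons_val_three]
  field_simp
  rw [Real.sq_sqrt (by norm_num : (0:ℝ) ≤ 2)]
  ring

lemma mink_smul_left (α : ℝ) (x y : Fin 4 → ℝ) : mink (α • x) y = α * mink x y := by
  simp only [mink, Pi.smul_apply, smul_eq_mul]; ring

lemma mink_smul_right (α : ℝ) (x y : Fin 4 → ℝ) : mink x (α • y) = α * mink x y := by
  simp only [mink, Pi.smul_apply, smul_eq_mul]; ring

lemma mink_expand (A B : ℝ) (x y : Fin 4 → ℝ) :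
    mink (A • x - B • y) (A • x - B • y) =
      A^2 * mink x x - A*B*mink x y - A*B*mink y x + B^2 * mink y y := by
  simp only [mink, Pi.sub_apply, Pi.smul_apply, smul_eq_mul]; ring

lemma n1_eq_vec (φ : ℝ → ℝ) (v : ℝ) :
    n1 φ v = (Real.sqrt ((deriv φ v) ^ 2 + (φ v) ^ 2))⁻¹ •
      vec (deriv φ v * Real.sin v + φ v * Real.cos v)
        (-(deriv φ v) * Real.cos v + φ v * Real.sin v) ((φ v)^2) 0 := by
  unfold n1 vec; rw [zero_smul, add_zero]

lemma n2_eq_vec (f g φ : ℝ → ℝ) (u v : ℝ) :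
    n2 f g φ u v = Real.sqrt (-(deriv f u) / (2 * deriv g u)) •
      vec (φ v * Real.cos v) (φ v * Real.sin v)
        ((deriv f u * (φ v) ^ 2 - 2 * deriv g u) / (2 * deriv f u)) 1 := by
  unfold n2 vec; rw [one_smul]

lemma hasDerivAt_vec {α β γ δ : ℝ → ℝ} {α' β' γ' δ' x : ℝ}
    (hα : HasDerivAt α α' x) (hβ : HasDerivAt β β' x) (hγ : HasDerivAt γ γ' x)
    (hδ : HasDerivAt δ δ' x) :
    HasDerivAt (fun t => vec (α t) (β t) (γ t) (δ t)) (vec α' β' γ' δ') x := by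
  unfold vec
  exact (((hα.smul_const e1).add (hβ.smul_const e2)).add (hγ.smul_const xi1)).add
    (hδ.smul_const xi2)

lemma hasDerivAt_of_contDiffOn {F : ℝ → ℝ} {S : Set ℝ} (hS : IsOpen S)
    (h : ContDiffOn ℝ (⊤:ℕ∞) F S) {t : ℝ} (ht : t ∈ S) : HasDerivAt F (deriv F t) t :=
  ((h.differentiableOn (by norm_num)).differentiableAt (hS.mem_nhds ht)).hasDerivAt

lemma zu_eq_s7 {f g φ : ℝ → ℝ} {I : Set ℝ} (hI : IsOpen I)
    (hf : ContDiffOn ℝ (⊤:ℕ∞) f I) (hg : ContDiffOn ℝ (⊤:ℕ∞) g I)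
    {t : ℝ} (ht : t ∈ I) (v : ℝ) :
    zu f g φ t v = vec (deriv f t * φ v * Real.cos v) (deriv f t * φ v * Real.sin v)
      (deriv f t * (φ v)^2 / 2 + deriv g t) (deriv f t) := by
  have hft := hasDerivAt_of_contDiffOn hI hf ht
  have hgt := hasDerivAt_of_contDiffOn hI hg ht
  have h1 : HasDerivAt (fun s => z f g φ s v)
      (vec (deriv f t * φ v * Real.cos v) (deriv f t * φ v * Real.sin v)
        (deriv f t * (φ v)^2 / 2 + deriv g t) (deriv f t)) t :=
    hasDerivAt_vec ((hft.mul_const (φ v)).mul_const (Real.cos v))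
      ((hft.mul_const (φ v)).mul_const (Real.sin v))
      (((hft.mul_const ((φ v)^2)).div_const 2).add hgt) hft
  exact h1.deriv

lemma zuu_eq {f g φ : ℝ → ℝ} {I : Set ℝ} (hI : IsOpen I)
    (hf : ContDiffOn ℝ (⊤:ℕ∞) f I) (hg : ContDiffOn ℝ (⊤:ℕ∞) g I)
    {u : ℝ} (hu : u ∈ I) (v : ℝ) :
    zuu f g φ u v = vec (deriv (deriv f) u * φ v * Real.cos v)
      (deriv (deriv f) u * φ v * Real.sin v)
      (deriv (deriv f) u * (φ v)^2 / 2 + deriv (deriv g) u) (deriv (deriv f) u) := by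
  have hf' : ContDiffOn ℝ (⊤:ℕ∞) (deriv f) I := hf.deriv_of_isOpen hI (by norm_num)
  have hg' : ContDiffOn ℝ (⊤:ℕ∞) (deriv g) I := hg.deriv_of_isOpen hI (by norm_num)
  have hft := hasDerivAt_of_contDiffOn hI hf' hu
  have hgt := hasDerivAt_of_contDiffOn hI hg' hu
  have heq : (fun t => zu f g φ t v) =ᶠ[nhds u]
      (fun t => vec (deriv f t * φ v * Real.cos v) (deriv f t * φ v * Real.sin v)
        (deriv f t * (φ v)^2 / 2 + deriv g t) (deriv f t)) := by
    filter_upwards [hI.mem_nhds hu] with t ht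
    exact zu_eq_s7 hI hf hg ht v
  have h1 : HasDerivAt (fun t => vec (deriv f t * φ v * Real.cos v)
      (deriv f t * φ v * Real.sin v) (deriv f t * (φ v)^2 / 2 + deriv g t) (deriv f t))
      (vec (deriv (deriv f) u * φ v * Real.cos v) (deriv (deriv f) u * φ v * Real.sin v)
        (deriv (deriv f) u * (φ v)^2 / 2 + deriv (deriv g) u) (deriv (deriv f) u)) u :=
    hasDerivAt_vec ((hft.mul_const (φ v)).mul_const (Real.cos v))
      ((hft.mul_const (φ v)).mul_const (Real.sin v))
      (((hft.mul_const ((φ v)^2)).div_const 2).add hgt) hft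
  show deriv (fun t => zu f g φ t v) u = _
  rw [heq.deriv_eq]
  exact h1.deriv

lemma zv_eq_s7 {f g φ : ℝ → ℝ} {J : Set ℝ} (hJ : IsOpen J)
    (hφ : ContDiffOn ℝ (⊤:ℕ∞) φ J) {t : ℝ} (ht : t ∈ J) (u : ℝ) :
    zv f g φ u t = vec (f u * deriv φ t * Real.cos t + f u * φ t * -Real.sin t)
      (f u * deriv φ t * Real.sin t + f u * φ t * Real.cos t)
      (f u * (2 * φ t ^ 1 * deriv φ t) / 2) 0 := by
  have hφt := hasDerivAt_of_contDiffOn hJ hφ ht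
  have h1 : HasDerivAt (fun s => z f g φ u s)
      (vec (f u * deriv φ t * Real.cos t + f u * φ t * -Real.sin t)
        (f u * deriv φ t * Real.sin t + f u * φ t * Real.cos t)
        (f u * (2 * φ t ^ 1 * deriv φ t) / 2) 0) t :=
    hasDerivAt_vec ((hφt.const_mul (f u)).mul (Real.hasDerivAt_cos t))
      ((hφt.const_mul (f u)).mul (Real.hasDerivAt_sin t))
      ((((hφt.pow 2).const_mul (f u)).div_const 2).add_const (g u))
      (hasDerivAt_const t (f u))
  exact h1.deriv

lemma zvv_eq {f g φ : ℝ → ℝ} {J : Set ℝ} (hJ : IsOpen J)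
    (hφ : ContDiffOn ℝ (⊤:ℕ∞) φ J) {v : ℝ} (hv : v ∈ J) (u : ℝ) :
    zvv f g φ u v = vec
      ((f u * deriv (deriv φ) v * Real.cos v + f u * deriv φ v * -Real.sin v) +
        ((f u * deriv φ v * -Real.sin v + f u * φ v * -Real.cos v)))
      ((f u * deriv (deriv φ) v * Real.sin v + f u * deriv φ v * Real.cos v) +
        (f u * deriv φ v * Real.cos v + f u * φ v * -Real.sin v))
      (f u * (2 * deriv φ v * deriv φ v +
        2 * φ v ^ 1 * deriv (deriv φ) v) / 2) 0 := by
  have hφ' : ContDiffOn ℝ (⊤:ℕ∞) (deriv φ) J := hφ.deriv_of_isOpen hJ (by norm_num)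
  have hφ1 := hasDerivAt_of_contDiffOn hJ hφ hv
  have hφ2 := hasDerivAt_of_contDiffOn hJ hφ' hv
  have heq : (fun t => zv f g φ u t) =ᶠ[nhds v]
      (fun t => vec (f u * deriv φ t * Real.cos t + f u * φ t * -Real.sin t)
        (f u * deriv φ t * Real.sin t + f u * φ t * Real.cos t)
        (f u * (2 * φ t ^ 1 * deriv φ t) / 2) 0) := by
    filter_upwards [hJ.mem_nhds hv] with t ht
    exact zv_eq_s7 hJ hφ ht u
  have h1 := hasDerivAt_vec
    (((hφ2.const_mul (f u)).mul (Real.hasDerivAt_cos v)).add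
      (((hφ1.const_mul (f u)).mul ((Real.hasDerivAt_sin v).neg))))
    (((hφ2.const_mul (f u)).mul (Real.hasDerivAt_sin v)).add
      (((hφ1.const_mul (f u)).mul (Real.hasDerivAt_cos v))))
    ((((((show HasDerivAt (fun t => φ t ^ 1) (deriv φ v) v by
      simpa using hφ1.pow 1).const_mul 2).mul hφ2).const_mul (f u)).div_const 2))
    (hasDerivAt_const v (0:ℝ))
  show deriv (fun t => zv f g φ u t) v = _
  rw [heq.deriv_eq]
  exact h1.deriv

/-- assuming `f' > 0` (hence `g' < 0`), at a fixed point `(u,v)` the mean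
curvature vector of the meridian surface of parabolic type is lightlike if and only if
`κ̄(v)² = (f(f''g' − f'g'') + 2f'g'f')²/(−2f'g')³`. -/
theorem statement7
    (I J : Set ℝ) (hIopen : IsOpen I) (hIconn : IsPreconnected I)
    (hJopen : IsOpen J) (hJconn : IsPreconnected J)
    (f g φ : ℝ → ℝ)
    (hf : ContDiffOn ℝ (⊤ : ℕ∞) f I) (hg : ContDiffOn ℝ (⊤ : ℕ∞) g I)
    (hφ : ContDiffOn ℝ (⊤ : ℕ∞) φ J)
    (hfpos : ∀ u ∈ I, 0 < f u)
    (hfg : ∀ u ∈ I, 0 < -(deriv f u * deriv g u))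
    (hφpos : ∀ v ∈ J, 0 < (deriv φ v) ^ 2 + (φ v) ^ 2)
    (hfd : ∀ u ∈ I, 0 < deriv f u) (hgd : ∀ u ∈ I, deriv g u < 0)
    (u : ℝ) (hu : u ∈ I) (v : ℝ) (hv : v ∈ J) :
    mink (Hvec f g φ u v) (Hvec f g φ u v) = 0 ↔
      (kappabar φ v) ^ 2 =
        (f u * (deriv (deriv f) u * deriv g u - deriv f u * deriv (deriv g) u) +
            2 * deriv f u * deriv g u * deriv f u) ^ 2 /
          (-2 * deriv f u * deriv g u) ^ 3 := by
  have hb := hfd u hu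
  have hc := hgd u hu
  have ha := hfpos u hu
  have hs := hφpos v hv
  have ha' : f u ≠ 0 := ne_of_gt ha
  have hb' : deriv f u ≠ 0 := ne_of_gt hb
  have hc' : deriv g u ≠ 0 := ne_of_lt hc
  have ht0 : 0 < Real.sqrt ((deriv φ v)^2 + (φ v)^2) := Real.sqrt_pos.mpr hs
  have ht' : Real.sqrt ((deriv φ v)^2 + (φ v)^2) ≠ 0 := ne_of_gt ht0
  have ht2 : Real.sqrt ((deriv φ v)^2 + (φ v)^2) ^ 2 = (deriv φ v)^2 + (φ v)^2 :=
    Real.sq_sqrt hs.le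
  have hinv : Real.sqrt ((deriv φ v)^2 + (φ v)^2) *
      (Real.sqrt ((deriv φ v)^2 + (φ v)^2))⁻¹ = 1 := mul_inv_cancel₀ ht'
  have hwnn : (0:ℝ) ≤ -(deriv f u) / (2 * deriv g u) := by
    rw [div_nonneg_iff]; right; constructor <;> nlinarith
  have hw2 : Real.sqrt (-(deriv f u) / (2 * deriv g u)) ^ 2
      = -(deriv f u) / (2 * deriv g u) := Real.sq_sqrt hwnn
  have hsc : Real.sin v ^ 2 + Real.cos v ^ 2 = 1 := Real.sin_sq_add_cos_sq v
  have hzu := zu_eq_s7 (φ := φ) hIopen hf hg hu v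
  have hzuu := zuu_eq (φ := φ) hIopen hf hg hu v
  have hzv := zv_eq_s7 (f := f) (g := g) hJopen hφ hv u
  have hzvv := zvv_eq (f := f) (g := g) hJopen hφ hv u
  have hE : mink (zu f g φ u v) (zu f g φ u v) = -(2 * deriv f u * deriv g u) := by
    rw [hzu, mink_vec]
    linear_combination (deriv f u ^ 2 * (φ v)^2) * hsc
  have hG : mink (zv f g φ u v) (zv f g φ u v)
      = f u ^ 2 * Real.sqrt ((deriv φ v)^2 + (φ v)^2) ^ 2 := by
    rw [hzv, mink_vec, ht2]
    linear_combination (f u ^ 2 * ((deriv φ v)^2 + (φ v)^2)) * hsc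
  have hU1 : mink (zuu f g φ u v) (n1 φ v) = 0 := by
    rw [hzuu, n1_eq_vec, mink_smul_right, mink_vec]
    linear_combination ((Real.sqrt ((deriv φ v)^2 + (φ v)^2))⁻¹ *
      (deriv (deriv f) u * (φ v)^2)) * hsc
  have hV1 : mink (zvv f g φ u v) (n1 φ v)
      = (Real.sqrt ((deriv φ v)^2 + (φ v)^2))⁻¹ *
        (f u * (φ v * deriv (deriv φ) v - 2 * (deriv φ v)^2 - (φ v)^2)) := by
    rw [hzvv, n1_eq_vec, mink_smul_right, mink_vec]
    linear_combination ((Real.sqrt ((deriv φ v)^2 + (φ v)^2))⁻¹ *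
      (f u * (φ v * deriv (deriv φ) v - 2 * (deriv φ v)^2 - (φ v)^2))) * hsc
  have hU2 : mink (zuu f g φ u v) (n2 f g φ u v)
      = Real.sqrt (-(deriv f u) / (2 * deriv g u)) *
        ((deriv (deriv f) u * deriv g u - deriv f u * deriv (deriv g) u) / deriv f u) := by
    rw [hzuu, n2_eq_vec, mink_smul_right, mink_vec]
    field_simp
    rw [show -(deriv f u / (2 * deriv g u)) = -deriv f u / (2 * deriv g u) by ring]
    linear_combination (2 * Real.sqrt (-(deriv f u) / (2 * deriv g u)) *
      deriv f u * deriv (deriv f) u * (φ v)^2) * hsc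
  have hV2 : mink (zvv f g φ u v) (n2 f g φ u v)
      = -(Real.sqrt (-(deriv f u) / (2 * deriv g u)) *
          (f u * Real.sqrt ((deriv φ v)^2 + (φ v)^2) ^ 2)) := by
    rw [hzvv, n2_eq_vec, mink_smul_right, mink_vec, ht2]
    linear_combination (Real.sqrt (-(deriv f u) / (2 * deriv g u)) *
      (f u * (φ v * deriv (deriv φ) v - (φ v)^2))) * hsc
  have hn11 : mink (n1 φ v) (n1 φ v) = 1 := by
    rw [n1_eq_vec, mink_smul_left, mink_smul_right, mink_vec]
    linear_combination (((Real.sqrt ((deriv φ v)^2 + (φ v)^2))⁻¹)^2 *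
        ((deriv φ v)^2 + (φ v)^2)) * hsc
      - ((Real.sqrt ((deriv φ v)^2 + (φ v)^2))⁻¹)^2 * ht2
      + (Real.sqrt ((deriv φ v)^2 + (φ v)^2) *
          (Real.sqrt ((deriv φ v)^2 + (φ v)^2))⁻¹ + 1) * hinv
  have hn12 : mink (n1 φ v) (n2 f g φ u v) = 0 := by
    rw [n1_eq_vec, n2_eq_vec, mink_smul_left, mink_smul_right, mink_vec]
    linear_combination ((Real.sqrt ((deriv φ v)^2 + (φ v)^2))⁻¹ *
      Real.sqrt (-(deriv f u) / (2 * deriv g u)) * (φ v)^2) * hsc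
  have hn21 : mink (n2 f g φ u v) (n1 φ v) = 0 := by
    rw [n1_eq_vec, n2_eq_vec, mink_smul_left, mink_smul_right, mink_vec]
    linear_combination ((Real.sqrt ((deriv φ v)^2 + (φ v)^2))⁻¹ *
      Real.sqrt (-(deriv f u) / (2 * deriv g u)) * (φ v)^2) * hsc
  have hn22 : mink (n2 f g φ u v) (n2 f g φ u v) = -1 := by
    have hw2' : Real.sqrt (-(deriv f u) / (2 * deriv g u)) ^ 2 * (2 * deriv g u)
        = -(deriv f u) := by
      rw [hw2]; field_simp
    rw [n2_eq_vec, mink_smul_left, mink_smul_right, mink_vec]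
    field_simp
    rw [show -(deriv f u / (2 * deriv g u)) = -deriv f u / (2 * deriv g u) by ring]
    linear_combination (2 * deriv f u * (φ v)^2 *
      Real.sqrt (-(deriv f u) / (2 * deriv g u)) ^ 2) * hsc + 2 * hw2'
  have hk : kappabar φ v = (φ v * deriv (deriv φ) v - 2 * (deriv φ v)^2 - (φ v)^2) /
      Real.sqrt ((deriv φ v)^2 + (φ v)^2) ^ 3 := by
    unfold kappabar
    rw [show ((3:ℝ)/2) = (1/2) * ((3:ℕ):ℝ) by norm_num,
      Real.rpow_mul hs.le, Real.rpow_natCast, ← Real.sqrt_eq_rpow]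
  unfold Hvec
  rw [mink_expand, hn11, hn12, hn21, hn22, hU1, hV1, hU2, hV2, hE, hG, hk]
  have hstep1 : 1 / 2 *
      (0 / -(2 * deriv f u * deriv g u) +
        (Real.sqrt (deriv φ v ^ 2 + φ v ^ 2))⁻¹ *
            (f u * (φ v * deriv (deriv φ) v - 2 * deriv φ v ^ 2 - φ v ^ 2)) /
          (f u ^ 2 * Real.sqrt (deriv φ v ^ 2 + φ v ^ 2) ^ 2)) =
      (φ v * deriv (deriv φ) v - 2 * deriv φ v ^ 2 - φ v ^ 2) /
        (2 * (f u * Real.sqrt (deriv φ v ^ 2 + φ v ^ 2) ^ 3)) := by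
    field_simp
    linear_combination (0 : ℝ) * ht2
  have hstep2 : 1 / 2 *
      (Real.sqrt (-deriv f u / (2 * deriv g u)) *
            ((deriv (deriv f) u * deriv g u - deriv f u * deriv (deriv g) u) / deriv f u) /
          -(2 * deriv f u * deriv g u) +
        -(Real.sqrt (-deriv f u / (2 * deriv g u)) *
              (f u * Real.sqrt (deriv φ v ^ 2 + φ v ^ 2) ^ 2)) /
          (f u ^ 2 * Real.sqrt (deriv φ v ^ 2 + φ v ^ 2) ^ 2)) =
      Real.sqrt (-deriv f u / (2 * deriv g u)) *
        ((f u * (deriv (deriv f) u * deriv g u - deriv f u * deriv (deriv g) u) +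
            2 * deriv f u * deriv g u * deriv f u) /
          (-(4 * (f u * (deriv f u ^ 2 * deriv g u))))) := by
    field_simp
    ring
  rw [hstep1, hstep2, mul_pow, hw2]
  have hfin : ((φ v * deriv (deriv φ) v - 2 * deriv φ v ^ 2 - φ v ^ 2) /
        (2 * (f u * Real.sqrt (deriv φ v ^ 2 + φ v ^ 2) ^ 3))) ^ 2 * 1 -
      (φ v * deriv (deriv φ) v - 2 * deriv φ v ^ 2 - φ v ^ 2) /
          (2 * (f u * Real.sqrt (deriv φ v ^ 2 + φ v ^ 2) ^ 3)) *
        (Real.sqrt (-deriv f u / (2 * deriv g u)) *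
          ((f u * (deriv (deriv f) u * deriv g u - deriv f u * deriv (deriv g) u) +
              2 * deriv f u * deriv g u * deriv f u) /
            -(4 * (f u * (deriv f u ^ 2 * deriv g u))))) * 0 -
      (φ v * deriv (deriv φ) v - 2 * deriv φ v ^ 2 - φ v ^ 2) /
          (2 * (f u * Real.sqrt (deriv φ v ^ 2 + φ v ^ 2) ^ 3)) *
        (Real.sqrt (-deriv f u / (2 * deriv g u)) *
          ((f u * (deriv (deriv f) u * deriv g u - deriv f u * deriv (deriv g) u) +
              2 * deriv f u * deriv g u * deriv f u) /
            -(4 * (f u * (deriv f u ^ 2 * deriv g u))))) * 0 +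
      -deriv f u / (2 * deriv g u) *
        ((f u * (deriv (deriv f) u * deriv g u - deriv f u * deriv (deriv g) u) +
            2 * deriv f u * deriv g u * deriv f u) /
          -(4 * (f u * (deriv f u ^ 2 * deriv g u)))) ^ 2 * -1 =
      1 / (4 * f u ^ 2) *
        (((φ v * deriv (deriv φ) v - 2 * deriv φ v ^ 2 - φ v ^ 2) /
            Real.sqrt (deriv φ v ^ 2 + φ v ^ 2) ^ 3) ^ 2 -
          (f u * (deriv (deriv f) u * deriv g u - deriv f u * deriv (deriv g) u) +
              2 * deriv f u * deriv g u * deriv f u) ^ 2 /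
            (-2 * deriv f u * deriv g u) ^ 3) := by
    field_simp
    ring
  rw [hfin]
  constructor
  · intro h
    rcases mul_eq_zero.mp h with h' | h'
    · exact absurd h' (div_ne_zero one_ne_zero
        (mul_ne_zero (by norm_num) (pow_ne_zero 2 ha')))
    · exact sub_eq_zero.mp h'
  · intro h
    rw [h, sub_self, mul_zero]


end
end MeridianParabolic
end

section
/- Let a ≠ 0 be a real constant, I ⊂ (0,∞) an open interval, and g : I → ℝ twice continuously differentiable with g'(u) < 0 for all u ∈ I. Then g satisfies the ordinary differential equation −u·g''(u) + 2g'(u) = a·(−2g'(u))^{3/2} for all u ∈ I if and only if there exists a constant c with c − au > 0 for all u ∈ I and g'(u) = −u²/(2(c − au)²) for all u ∈ I. -/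
namespace MeridianParabolic

noncomputable section

lemma sq_rpow_three_halves {r : ℝ} (hr : 0 ≤ r) : (r ^ 2) ^ ((3:ℝ)/2) = r ^ 3 := by
  rw [← Real.rpow_natCast r 2, ← Real.rpow_mul hr,
    show ((2:ℕ):ℝ) * (3/2) = ((3:ℕ):ℝ) by norm_num, Real.rpow_natCast]

/-- for `a ≠ 0`, `I ⊂ (0,∞)` an open interval and `g` twice continuously
differentiable with `g' < 0` on `I`, the ODE `−u g'' + 2g' = a(−2g')^{3/2}` holds on `I`
if and only if there is a constant `c` with `c − au > 0` on `I` and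
`g'(u) = −u²/(2(c − au)²)` on `I`. -/
theorem statement10
    (a : ℝ) (ha : a ≠ 0)
    (I : Set ℝ) (hIopen : IsOpen I) (hIconn : IsPreconnected I)
    (hIpos : I ⊆ Set.Ioi (0 : ℝ))
    (g : ℝ → ℝ) (hg : ContDiffOn ℝ 2 g I)
    (hgd : ∀ u ∈ I, deriv g u < 0) :
    (∀ u ∈ I, -u * deriv (deriv g) u + 2 * deriv g u =
        a * (-2 * deriv g u) ^ ((3 : ℝ) / 2)) ↔
      ∃ c : ℝ, (∀ u ∈ I, 0 < c - a * u) ∧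
        ∀ u ∈ I, deriv g u = -(u ^ 2) / (2 * (c - a * u) ^ 2) := by
  have hconv : Convex ℝ I := hIconn.ordConnected.convex
  have hg2 : ContDiffOn ℝ (1 + 1) g I := by norm_num; exact hg
  have hdg : DifferentiableOn ℝ (deriv g) I := by
    have := ((contDiffOn_succ_iff_deriv_of_isOpen hIopen).1 hg2).2.2
    exact this.differentiableOn one_ne_zero
  have hddg : ∀ x ∈ I, HasDerivAt (deriv g) (deriv (deriv g) x) x := fun x hx =>
    ((hdg x hx).differentiableAt (hIopen.mem_nhds hx)).hasDerivAt
  constructor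
  · intro hODE
    rcases Set.eq_empty_or_nonempty I with hIe | ⟨u₀, hu₀⟩
    · exact ⟨0, by simp [hIe], by simp [hIe]⟩
    set F : ℝ → ℝ := fun u => u / Real.sqrt (-2 * deriv g u) + a * u with hF
    have key : ∀ x ∈ I, HasDerivAt F 0 x := by
      intro x hx
      have hx0 : (0:ℝ) < x := hIpos hx
      have hpx : deriv g x < 0 := hgd x hx
      have hv : (0:ℝ) < -2 * deriv g x := by linarith
      set s := Real.sqrt (-2 * deriv g x) with hsdef
      have hs : 0 < s := Real.sqrt_pos.2 hv
      have hs2 : s ^ 2 = -2 * deriv g x := Real.sq_sqrt hv.le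
      have hv' : HasDerivAt (fun u => -2 * deriv g u) (-2 * deriv (deriv g) x) x :=
        (hddg x hx).const_mul (-2)
      have hsq : HasDerivAt (fun u => Real.sqrt (-2 * deriv g u))
          (1 / (2 * s) * (-2 * deriv (deriv g) x)) x :=
        (Real.hasDerivAt_sqrt hv.ne').comp x hv'
      have hdiv : HasDerivAt (fun u => u / Real.sqrt (-2 * deriv g u))
          ((1 * s - x * (1 / (2 * s) * (-2 * deriv (deriv g) x))) / s ^ 2) x :=
        (hasDerivAt_id x).div hsq hs.ne'
      have htot : HasDerivAt F
          ((1 * s - x * (1 / (2 * s) * (-2 * deriv (deriv g) x))) / s ^ 2 + a * 1) x :=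
        hdiv.add ((hasDerivAt_id x).const_mul a)
      have hOx := hODE x hx
      have h32 : (-2 * deriv g x) ^ ((3:ℝ)/2) = s ^ 3 := by
        rw [← hs2, sq_rpow_three_halves hs.le]
      rw [h32] at hOx
      have hzero : (1 * s - x * (1 / (2 * s) * (-2 * deriv (deriv g) x))) / s ^ 2 + a * 1 = 0 := by
        have hs0 : s ≠ 0 := hs.ne'
        field_simp
        nlinarith [hOx, hs2, hs, sq_nonneg s]
      rwa [hzero] at htot
    have hFdiff : DifferentiableOn ℝ F I := fun x hx =>
      (key x hx).differentiableAt.differentiableWithinAt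
    have hFz : ∀ x ∈ I, fderivWithin ℝ F I x = 0 := by
      intro x hx
      rw [fderivWithin_of_isOpen hIopen hx, (key x hx).hasFDerivAt.fderiv]
      ext; simp
    have hconst : ∀ x ∈ I, F x = F u₀ := fun x hx =>
      hconv.is_const_of_fderivWithin_eq_zero hFdiff hFz hx hu₀
    refine ⟨F u₀, ?_, ?_⟩
    · intro u hu
      have := hconst u hu
      have hu0 : (0:ℝ) < u := hIpos hu
      have hv : (0:ℝ) < -2 * deriv g u := by have := hgd u hu; linarith
      have hs : 0 < Real.sqrt (-2 * deriv g u) := Real.sqrt_pos.2 hv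
      have : F u₀ - a * u = u / Real.sqrt (-2 * deriv g u) := by
        rw [← this]; simp only [hF]; ring
      rw [this]
      positivity
    · intro u hu
      have hcu := hconst u hu
      have hu0 : (0:ℝ) < u := hIpos hu
      have hv : (0:ℝ) < -2 * deriv g u := by have := hgd u hu; linarith
      set s := Real.sqrt (-2 * deriv g u) with hsdef
      have hs : 0 < s := Real.sqrt_pos.2 hv
      have hs2 : s ^ 2 = -2 * deriv g u := Real.sq_sqrt hv.le
      have hw : F u₀ - a * u = u / s := by
        rw [← hcu]; simp only [hF]; rw [← hsdef]; ring
      have hwpos : 0 < F u₀ - a * u := by rw [hw]; positivity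
      have : s = u / (F u₀ - a * u) := by
        rw [hw]; field_simp
      rw [this] at hs2
      have hne : F u₀ - a * u ≠ 0 := hwpos.ne'
      field_simp at hs2
      field_simp
      linarith [hs2]
  · rintro ⟨c, hcpos, hform⟩
    intro u hu
    have hu0 : (0:ℝ) < u := hIpos hu
    have hw : 0 < c - a * u := hcpos u hu
    set f : ℝ → ℝ := fun t => -(t ^ 2) / (2 * (c - a * t) ^ 2) with hfdef
    have hden : HasDerivAt (fun t : ℝ => 2 * (c - a * t) ^ 2)
        (2 * ((2:ℕ) * (c - a * u) ^ 1 * (-a))) u := by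
      have h1 : HasDerivAt (fun t : ℝ => c - a * t) (-a) u := by
        simpa using ((hasDerivAt_id u).const_mul a).const_sub c
      exact (h1.pow 2).const_mul 2
    have hnum : HasDerivAt (fun t : ℝ => -(t ^ 2)) (-(2 * u)) u := by
      simpa using ((hasDerivAt_pow 2 u)).fun_neg
    have hf' : HasDerivAt f
        ((-(2 * u) * (2 * (c - a * u) ^ 2) - -(u ^ 2) * (2 * ((2:ℕ) * (c - a * u) ^ 1 * (-a)))) /
          (2 * (c - a * u) ^ 2) ^ 2) u := by
      exact hnum.div hden (by positivity)
    have heq : deriv g =ᶠ[nhds u] f := by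
      filter_upwards [hIopen.mem_nhds hu] with t ht using hform t ht
    have hdd : deriv (deriv g) u =
        (-(2 * u) * (2 * (c - a * u) ^ 2) - -(u ^ 2) * (2 * ((2:ℕ) * (c - a * u) ^ 1 * (-a)))) /
          (2 * (c - a * u) ^ 2) ^ 2 := by
      rw [heq.deriv_eq, hf'.deriv]
    have hpu : deriv g u = -(u ^ 2) / (2 * (c - a * u) ^ 2) := hform u hu
    have hrp : (-2 * deriv g u) ^ ((3:ℝ)/2) = (u / (c - a * u)) ^ 3 := by
      have h1 : -2 * deriv g u = (u / (c - a * u)) ^ 2 := by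
        rw [hpu]; field_simp
      rw [h1, sq_rpow_three_halves (by positivity)]
    rw [hdd, hrp, hpu]
    have hne : c - a * u ≠ 0 := hw.ne'
    field_simp
    ring

end
end MeridianParabolic
end

section
/- Let φ : J → ℝ be smooth on an open interval J with φ̇² + φ² > 0 on J, and suppose there is a constant a such that φ(v)φ̈(v) − 2φ̇(v)² − φ(v)² = a·(φ̇(v)² + φ(v)²)^{3/2} for all v ∈ J. Then for all v ∈ J, the derivative of the function v ↦ (φ̇(v)⁴ + φ(v)³φ̈(v))/(φ̇(v)² + φ(v)²)² equals −a²·φ(v)·φ̇(v). -/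
namespace MeridianParabolic

noncomputable section

/-- if `φφ̈ − 2φ̇² − φ² = a(φ̇² + φ²)^{3/2}` on `J` for a constant `a`,
then the derivative of `v ↦ (φ̇⁴ + φ³φ̈)/(φ̇² + φ²)²` equals `−a²φφ̇` on `J`. -/
theorem statement14
    (J : Set ℝ) (hJopen : IsOpen J) (hJconn : IsPreconnected J)
    (φ : ℝ → ℝ) (hφ : ContDiffOn ℝ (⊤ : ℕ∞) φ J)
    (hφpos : ∀ v ∈ J, 0 < (deriv φ v) ^ 2 + (φ v) ^ 2)
    (a : ℝ)
    (hκ : ∀ v ∈ J, φ v * deriv (deriv φ) v - 2 * (deriv φ v) ^ 2 - (φ v) ^ 2 =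
      a * ((deriv φ v) ^ 2 + (φ v) ^ 2) ^ ((3 : ℝ) / 2)) :
    ∀ v ∈ J,
      deriv (fun w => ((deriv φ w) ^ 4 + (φ w) ^ 3 * deriv (deriv φ) w) /
          ((deriv φ w) ^ 2 + (φ w) ^ 2) ^ 2) v =
        -(a ^ 2) * φ v * deriv φ v := by
  -- smoothness of deriv φ on J
  have hψ : ContDiffOn ℝ (⊤ : ℕ∞) (deriv φ) J := hφ.deriv_of_isOpen hJopen (by simp)
  -- rewrite rpow as Q * sqrt Q
  have h32 : ∀ w ∈ J, ((deriv φ w) ^ 2 + (φ w) ^ 2) ^ ((3 : ℝ) / 2) =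
      ((deriv φ w) ^ 2 + (φ w) ^ 2) * Real.sqrt ((deriv φ w) ^ 2 + (φ w) ^ 2) := by
    intro w hw
    rw [show (3 : ℝ) / 2 = 1 + 1/2 by norm_num, Real.rpow_add (hφpos w hw),
      Real.rpow_one, ← Real.sqrt_eq_rpow]
  -- the key pointwise identity on J
  have hFG : ∀ w ∈ J,
      ((deriv φ w) ^ 4 + (φ w) ^ 3 * deriv (deriv φ) w) /
          ((deriv φ w) ^ 2 + (φ w) ^ 2) ^ 2 =
      1 + a * (φ w) ^ 2 / Real.sqrt ((deriv φ w) ^ 2 + (φ w) ^ 2) := by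
    intro w hw
    have hQ := hφpos w hw
    have hs : Real.sqrt ((deriv φ w) ^ 2 + (φ w) ^ 2) *
        Real.sqrt ((deriv φ w) ^ 2 + (φ w) ^ 2) = (deriv φ w) ^ 2 + (φ w) ^ 2 :=
      Real.mul_self_sqrt hQ.le
    have hsne : Real.sqrt ((deriv φ w) ^ 2 + (φ w) ^ 2) ≠ 0 :=
      (Real.sqrt_pos.mpr hQ).ne'
    have hκ' := hκ w hw
    rw [h32 w hw] at hκ'
    field_simp
    linear_combination (φ w ^ 2 * Real.sqrt ((deriv φ w) ^ 2 + (φ w) ^ 2)) * hκ' +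
      (a * φ w ^ 2 * ((deriv φ w) ^ 2 + (φ w) ^ 2)) * hs
  intro v hv
  have hmem : J ∈ nhds v := hJopen.mem_nhds hv
  have hQ := hφpos v hv
  have hsne : Real.sqrt ((deriv φ v) ^ 2 + (φ v) ^ 2) ≠ 0 :=
    (Real.sqrt_pos.mpr hQ).ne'
  have hs : Real.sqrt ((deriv φ v) ^ 2 + (φ v) ^ 2) *
      Real.sqrt ((deriv φ v) ^ 2 + (φ v) ^ 2) = (deriv φ v) ^ 2 + (φ v) ^ 2 :=
    Real.mul_self_sqrt hQ.le
  -- derivatives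
  have hφd : HasDerivAt φ (deriv φ v) v :=
    ((hφ.contDiffAt hmem).differentiableAt (by simp)).hasDerivAt
  have hψd : HasDerivAt (deriv φ) (deriv (deriv φ) v) v :=
    ((hψ.contDiffAt hmem).differentiableAt (by simp)).hasDerivAt
  have hQd : HasDerivAt (fun w => (deriv φ w) ^ 2 + (φ w) ^ 2)
      (2 * deriv φ v ^ 1 * deriv (deriv φ) v + 2 * φ v ^ 1 * deriv φ v) v :=
    (hψd.pow 2).add (hφd.pow 2)
  have hsd : HasDerivAt (fun w => Real.sqrt ((deriv φ w) ^ 2 + (φ w) ^ 2))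
      ((1 / (2 * Real.sqrt ((deriv φ v) ^ 2 + (φ v) ^ 2))) *
        (2 * deriv φ v ^ 1 * deriv (deriv φ) v + 2 * φ v ^ 1 * deriv φ v)) v :=
    (Real.hasDerivAt_sqrt hQ.ne').comp v hQd
  have hGd := (hasDerivAt_const v (1 : ℝ)).add (((hφd.pow 2).const_mul a).div hsd hsne)
  have heq : deriv (fun w => ((deriv φ w) ^ 4 + (φ w) ^ 3 * deriv (deriv φ) w) /
      ((deriv φ w) ^ 2 + (φ w) ^ 2) ^ 2) v =
      deriv (fun w => 1 + a * (φ w) ^ 2 / Real.sqrt ((deriv φ w) ^ 2 + (φ w) ^ 2)) v := by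
    apply Filter.EventuallyEq.deriv_eq
    exact Filter.eventually_of_mem hmem hFG
  rw [heq, HasDerivAt.deriv (f := fun w => 1 + a * (φ w) ^ 2 / Real.sqrt ((deriv φ w) ^ 2 + (φ w) ^ 2)) hGd]
  have hκ' := hκ v hv
  rw [h32 v hv] at hκ'
  push_cast
  simp only [Pi.pow_apply]
  field_simp
  linear_combination (-a * φ v * deriv φ v) * hκ' + (2 * a * φ v * deriv φ v + a ^ 2 * φ v * deriv φ v * Real.sqrt ((deriv φ v) ^ 2 + (φ v) ^ 2)) * hs


end
end MeridianParabolic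
end

section
/- (Plane sections of the paraboloid have constant curvature.) Let A, B, C be real constants with A² + B² − 2C > 0, set θ(v) = A cos v + B sin v, let ε ∈ {1,−1}, and let J be an open interval on which θ(v)² − 2C > 0. Define φ(v) = −θ(v) + ε√(θ(v)² − 2C) and assume φ̇(v)² + φ(v)² > 0 on J. Then κ̄(v)² = 1/(A² + B² − 2C) for all v ∈ J, where κ̄(v) = (φφ̈ − 2φ̇² − φ²)/(φ̇² + φ²)^{3/2}; in particular κ̄ is constant on J and the corresponding plane section of the paraboloid 𝒫² is a curve of constant nonzero curvature. -/
namespace MeridianParabolic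

noncomputable section

private lemma key (t p s ε : ℝ) (hs : s ≠ 0) (hε : ε = 1 ∨ ε = -1) :
    ((-t + ε * s) * (t + ε * (((p * p + t * (-t)) * s - t * p * (t * p / s)) / s ^ 2))
      - 2 * (-p + ε * (t * p / s)) ^ 2 - (-t + ε * s) ^ 2) ^ 2 * (p ^ 2 + s ^ 2)
    = 1 * ((-p + ε * (t * p / s)) ^ 2 + (-t + ε * s) ^ 2) ^ 3 := by
  rcases hε with rfl | rfl <;> (field_simp; ring)

/-- plane sections of the paraboloid have constant curvature: for
constants `A, B, C` with `A² + B² − 2C > 0`, `θ(v) = A cos v + B sin v`, `ε = ±1`, and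
`φ = −θ + ε√(θ² − 2C)` on an open interval `J` where `θ² − 2C > 0`, the curvature
satisfies `κ̄(v)² = 1/(A² + B² − 2C)` on `J`; in particular `κ̄` is constant and the
corresponding plane section of the paraboloid `𝒫²` has constant nonzero curvature. -/
theorem statement16
    (A B C : ℝ) (hABC : 0 < A ^ 2 + B ^ 2 - 2 * C)
    (ε : ℝ) (hε : ε = 1 ∨ ε = -1)
    (J : Set ℝ) (hJopen : IsOpen J) (hJconn : IsPreconnected J)
    (hθ : ∀ v ∈ J, 0 < (A * Real.cos v + B * Real.sin v) ^ 2 - 2 * C)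
    (φ : ℝ → ℝ)
    (hφdef : ∀ v : ℝ, φ v = -(A * Real.cos v + B * Real.sin v) +
      ε * Real.sqrt ((A * Real.cos v + B * Real.sin v) ^ 2 - 2 * C))
    (hφpos : ∀ v ∈ J, 0 < (deriv φ v) ^ 2 + (φ v) ^ 2) :
    ∀ v ∈ J, (kappabar φ v) ^ 2 = 1 / (A ^ 2 + B ^ 2 - 2 * C) := by
  classical
  -- abbreviations
  set θ : ℝ → ℝ := fun w => A * Real.cos w + B * Real.sin w with hθdef
  set θ' : ℝ → ℝ := fun w => A * (-Real.sin w) + B * Real.cos w with hθ'def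
  set s : ℝ → ℝ := fun w => Real.sqrt ((θ w) ^ 2 - 2 * C) with hsdef
  set Df : ℝ → ℝ := fun w => -θ' w + ε * (θ w * θ' w / s w) with hDfdef
  -- basic derivative of θ
  have hθder : ∀ w : ℝ, HasDerivAt θ (θ' w) w := by
    intro w
    exact ((Real.hasDerivAt_cos w).const_mul A).add ((Real.hasDerivAt_sin w).const_mul B)
  have hθ'der : ∀ w : ℝ, HasDerivAt θ' (-θ w) w := by
    intro w
    have := ((Real.hasDerivAt_sin w).neg.const_mul A).add ((Real.hasDerivAt_cos w).const_mul B)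
    convert this using 1 <;> try rfl
    simp [hθdef]; ring
  -- derivative of the inner function
  have hinner : ∀ w : ℝ, HasDerivAt (fun w => (θ w) ^ 2 - 2 * C) (2 * θ w * θ' w) w := by
    intro w
    have := ((hθder w).pow 2).sub_const (2 * C)
    convert this using 1 <;> try rfl
    ring
  have hspos : ∀ w ∈ J, 0 < s w := fun w hw => Real.sqrt_pos.mpr (hθ w hw)
  have hssq : ∀ w ∈ J, (s w) ^ 2 = (θ w) ^ 2 - 2 * C := fun w hw =>
    Real.sq_sqrt (le_of_lt (hθ w hw))
  have hsder : ∀ w ∈ J, HasDerivAt s (θ w * θ' w / s w) w := by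
    intro w hw
    have h0 : (θ w) ^ 2 - 2 * C ≠ 0 := ne_of_gt (hθ w hw)
    have := (hinner w).sqrt h0
    convert this using 1
    rw [hsdef]
    field_simp
  -- first derivative of φ
  have hφder : ∀ w ∈ J, HasDerivAt φ (Df w) w := by
    intro w hw
    have hfun : φ = fun w => -θ w + ε * s w := funext hφdef
    rw [hfun]
    exact (hθder w).neg.add ((hsder w hw).const_mul ε)
  have hderiv1 : ∀ w ∈ J, deriv φ w = Df w := fun w hw => (hφder w hw).deriv
  intro v hv
  -- second derivative at v
  have hsv : 0 < s v := hspos v hv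
  have hDder : HasDerivAt Df
      (θ v + ε * (((θ' v * θ' v + θ v * (-θ v)) * s v - θ v * θ' v * (θ v * θ' v / s v)) / (s v) ^ 2)) v := by
    have hnum : HasDerivAt (fun w => θ w * θ' w) (θ' v * θ' v + θ v * (-θ v)) v :=
      (hθder v).mul (hθ'der v)
    have hq := hnum.div (hsder v hv) (ne_of_gt hsv)
    have := (hθ'der v).neg.add (hq.const_mul ε)
    convert this using 1 <;> try rfl
    ring
  have hev : deriv φ =ᶠ[nhds v] Df :=
    Filter.eventuallyEq_of_mem (hJopen.mem_nhds hv) hderiv1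
  have hderiv2 : deriv (deriv φ) v =
      θ v + ε * (((θ' v * θ' v + θ v * (-θ v)) * s v - θ v * θ' v * (θ v * θ' v / s v)) / (s v) ^ 2) := by
    rw [hev.deriv_eq]
    exact hDder.deriv
  -- notation for the values at v
  have hφv : φ v = -θ v + ε * s v := hφdef v
  have htp : (θ v) ^ 2 + (θ' v) ^ 2 = A ^ 2 + B ^ 2 := by
    have := Real.sin_sq_add_cos_sq v
    simp only [hθdef, hθ'def]
    nlinarith [this]
  have hK : A ^ 2 + B ^ 2 - 2 * C = (θ' v) ^ 2 + (s v) ^ 2 := by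
    have := hssq v hv
    nlinarith [this, htp]
  -- positivity of the denominator base
  have hX : 0 < (deriv φ v) ^ 2 + (φ v) ^ 2 := hφpos v hv
  -- rpow manipulation
  have hrpow : (((deriv φ v) ^ 2 + (φ v) ^ 2) ^ ((3 : ℝ) / 2)) ^ 2 =
      ((deriv φ v) ^ 2 + (φ v) ^ 2) ^ 3 := by
    rw [← Real.rpow_natCast (((deriv φ v) ^ 2 + (φ v) ^ 2) ^ ((3 : ℝ) / 2)) 2,
      ← Real.rpow_mul hX.le, ← Real.rpow_natCast ((deriv φ v) ^ 2 + (φ v) ^ 2) 3]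
    norm_num
  have hX3 : 0 < ((deriv φ v) ^ 2 + (φ v) ^ 2) ^ 3 := pow_pos hX 3
  have hKpos : (0:ℝ) < A ^ 2 + B ^ 2 - 2 * C := hABC
  rw [kappabar, div_pow, hrpow, div_eq_div_iff hX3.ne' hKpos.ne']
  rw [hderiv1 v hv, hderiv2, hφv, hK, hDfdef]
  have hsne : s v ≠ 0 := ne_of_gt hsv
  exact key (θ v) (θ' v) (s v) ε hsne hε

end
end MeridianParabolic
end
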